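/- There is a universal constant C > 0 such that for every μ > 0 and every p ∈ (0,1) there exists δ > 0 satisfying ⌈μδ⌉ · G(μ, δ) ≤ p; moreover δ can be chosen so that δ ≤ C · log₂(1/p) / (μ · log₂(log₂(1/p)/μ)) if μ ≤ log₂(1/p)/2, and δ ≤ C · √(log₂(μ + 1/p)/μ) if μ > log₂(1/p)/2. -/

import Mathlib

set_option maxHeartbeats 1000000


/-- The Chernoff–Hoeffding bound function `G(μ, δ) = (e^δ / (1+δ)^(1+δ))^μ`. -/
noncomputable def chernoffG (μ δ : ℝ) : ℝ :=
  (Real.exp δ / (1 + δ) ^ (1 + δ)) ^ μ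

private lemma log_ge_one_sub_inv' {t : ℝ} (ht : 0 < t) : 1 - 1/t ≤ Real.log t := by
  have h := Real.log_le_sub_one_of_pos (x := 1/t) (by positivity)
  rw [one_div, Real.log_inv] at h
  rw [one_div]
  linarith

private lemma chernoffG_eq' {μ δ : ℝ} (hδ : 0 ≤ δ) :
    chernoffG μ δ = Real.exp (μ * (δ - (1 + δ) * Real.log (1 + δ))) := by
  have h1 : (0:ℝ) < 1 + δ := by linarith
  rw [chernoffG, Real.rpow_def_of_pos h1, ← Real.exp_sub,
    Real.rpow_def_of_pos (Real.exp_pos _), Real.log_exp]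
  ring_nf

private lemma chernoff_key2' {δ : ℝ} (hδ : 0 ≤ δ) :
    δ^2 / (2*(2+δ)) ≤ (1+δ) * Real.log (1+δ) - δ := by
  set s := Real.sqrt (1+δ) with hs
  have hs0 : 0 < s := Real.sqrt_pos.2 (by linarith)
  have hs2 : s^2 = 1 + δ := Real.sq_sqrt (by linarith)
  have hs1 : 1 ≤ s := Real.one_le_sqrt.2 (by linarith)
  have hlog : Real.log (1+δ) = 2 * Real.log s := by
    rw [← hs2]; rw [Real.log_pow]; push_cast; ring
  have hls : s - 1 ≤ s * Real.log s := by
    have := log_ge_one_sub_inv' hs0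
    have h2 : s * (1 - 1/s) ≤ s * Real.log s := by
      apply mul_le_mul_of_nonneg_left this hs0.le
    calc s - 1 = s * (1 - 1/s) := by field_simp
    _ ≤ s * Real.log s := h2
  have h1 : s*(s-1) ≤ s^2 * Real.log s := by nlinarith [hls, hs0.le]
  have hA : 2*(2+2*s^2)*(s*(s-1)) ≤ 2*(2+2*s^2)*(s^2*Real.log s) :=
    mul_le_mul_of_nonneg_left h1 (by nlinarith [sq_nonneg s])
  have hd : δ = s^2 - 1 := by linarith
  rw [hlog, div_le_iff₀ (by linarith), hd]
  nlinarith [hA, sq_nonneg (s-1), sq_nonneg ((s-1)^2)]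

private lemma chernoff_reduce' {μ δ p : ℝ} (hμ : 0 < μ) (hδ : 0 < δ) (hp : 0 < p)
    (h : Real.log (1 + μ*δ) + μ*(δ - (1+δ)*Real.log (1+δ)) ≤ Real.log p) :
    (⌈μ * δ⌉ : ℝ) * chernoffG μ δ ≤ p := by
  have hμδ : 0 < μ * δ := mul_pos hμ hδ
  have h1 : (⌈μ * δ⌉ : ℝ) ≤ 1 + μ * δ := by
    have := Int.ceil_lt_add_one (μ * δ); linarith
  have hGe := chernoffG_eq' (μ := μ) hδ.le
  calc (⌈μ * δ⌉ : ℝ) * chernoffG μ δ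
      ≤ (1 + μ * δ) * chernoffG μ δ := by
        apply mul_le_mul_of_nonneg_right h1
        rw [hGe]; positivity
    _ = Real.exp (Real.log (1 + μ*δ) + μ*(δ - (1+δ)*Real.log (1+δ))) := by
        rw [hGe, Real.exp_add, Real.exp_log (by linarith)]
    _ ≤ Real.exp (Real.log p) := Real.exp_le_exp.2 h
    _ = p := Real.exp_log hp

theorem exists_H_bound :
    ∃ C : ℝ, 0 < C ∧
      ∀ μ p : ℝ, 0 < μ → p ∈ Set.Ioo (0 : ℝ) 1 →
        ∃ δ : ℝ, 0 < δ ∧ (⌈μ * δ⌉ : ℝ) * chernoffG μ δ ≤ p ∧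
          (μ ≤ Real.logb 2 (1 / p) / 2 →
            δ ≤ C * Real.logb 2 (1 / p) / (μ * Real.logb 2 (Real.logb 2 (1 / p) / μ))) ∧
          (Real.logb 2 (1 / p) / 2 < μ →
            δ ≤ C * Real.sqrt (Real.logb 2 (μ + 1 / p) / μ)) := by
  refine ⟨100, by norm_num, fun μ p hμ hp => ?_⟩
  obtain ⟨hp0, hp1⟩ := hp
  have hl2 : (0:ℝ) < Real.log 2 := Real.log_pos one_lt_two
  have hip : 1 < 1/p := by rw [lt_div_iff₀ hp0]; linarith
  set L := Real.logb 2 (1/p) with hLdef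
  have hL : 0 < L := Real.logb_pos one_lt_two hip
  clear_value L
  have hl1p : Real.log (1/p) = L * Real.log 2 := by
    rw [hLdef, Real.logb]; field_simp
  have hlp : Real.log p = -(L * Real.log 2) := by
    rw [one_div, Real.log_inv] at hl1p; linarith
  by_cases hcase : μ ≤ L / 2
  · -- Case 1 : δ = 8 x / log x with x = L/μ
    set x := L / μ with hxd
    clear_value x
    have hx : 2 ≤ x := by rw [hxd, le_div_iff₀ hμ]; linarith
    have hlx : 0 < Real.log x := Real.log_pos (by linarith)
    set δ := 8*x/Real.log x with hδdef
    clear_value δ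
    have hδ : 0 < δ := by rw [hδdef]; positivity
    refine ⟨δ, hδ, ?_, fun _ => ?_, fun h => absurd hcase (not_le.2 h)⟩
    · -- the Chernoff inequality
      apply chernoff_reduce' hμ hδ hp0
      have hA : Real.log (1 + μ*δ) ≤ μ*δ := by
        have := Real.log_le_sub_one_of_pos (x := 1 + μ*δ) (by positivity); linarith
      have h0 : 0 ≤ Real.log (1+δ) := Real.log_nonneg (by linarith)
      have hld : Real.log δ = 3*Real.log 2 + Real.log x - Real.log (Real.log x) := by
        rw [hδdef, Real.log_div (by positivity) (ne_of_gt hlx),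
          Real.log_mul (by norm_num) (by linarith)]
        rw [show (8:ℝ) = 2^3 by norm_num, Real.log_pow]; push_cast; ring
      have hll : Real.log (Real.log x) ≤ Real.log x / 2 - 1 + Real.log 2 := by
        have h1 := Real.log_le_sub_one_of_pos (x := Real.log x / 2) (by linarith)
        have h2 : Real.log (Real.log x) = Real.log (Real.log x / 2) + Real.log 2 := by
          rw [← Real.log_mul (by linarith) (by norm_num)]; ring_nf
        linarith
      have hdd : Real.log δ ≤ Real.log (1+δ) := Real.log_le_log hδ (by linarith)
      have key : Real.log 2 / 8 * Real.log x + 2 ≤ Real.log (1+δ) := by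
        have hprod : 0 ≤ (0.7 - Real.log 2) * Real.log x := by
          apply mul_nonneg _ hlx.le
          linarith [Real.log_two_lt_d9]
        nlinarith [Real.log_two_gt_d9]
      have key2 : x * Real.log 2 + 2*δ ≤ δ * Real.log (1+δ) := by
        have h3 := mul_le_mul_of_nonneg_left key hδ.le
        have h4 : δ * (Real.log 2 / 8 * Real.log x) = x * Real.log 2 := by
          rw [hδdef]; field_simp
        nlinarith [h3]
      have hB : μ*(δ - (1+δ)*Real.log (1+δ)) ≤ μ*(δ - δ*Real.log (1+δ)) := by
        apply mul_le_mul_of_nonneg_left _ hμ.le; nlinarith [h0]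
      have h5 := mul_le_mul_of_nonneg_left key2 hμ.le
      have hLx : L = μ * x := by rw [hxd]; field_simp
      rw [hlp]
      nlinarith [h5, hA, hB]
    · -- the size bound
      have hRW : 100 * L / (μ * Real.logb 2 x) = 100 * x * Real.log 2 / Real.log x := by
        rw [Real.logb, hxd]
        field_simp
      rw [hRW, hδdef]
      have hnum : 8*x ≤ 100*x*Real.log 2 := by
        nlinarith [mul_nonneg (show (0:ℝ) ≤ 100 * Real.log 2 - 8 by
          linarith [Real.log_two_gt_d9]) (show (0:ℝ) ≤ x by linarith)]
      gcongr
  · -- Case 2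
    push_neg at hcase
    have hc2 : L < 2*μ := by linarith
    set L' := Real.logb 2 (μ + 1/p) with hL'def
    have hL'0 : 0 < L' := Real.logb_pos one_lt_two (by linarith)
    clear_value L'
    have hL'eq : Real.log (μ + 1/p) = L' * Real.log 2 := by
      rw [hL'def, Real.logb]; field_simp
    by_cases hsub : μ ≤ 1/3
    · -- small μ : δ = 3
      refine ⟨3, by norm_num, ?_, fun h => absurd h (not_le.2 (by linarith)), fun _ => ?_⟩
      · have hc : ⌈μ * 3⌉ = (1:ℤ) := by
          rw [Int.ceil_eq_iff]
          constructor <;> push_cast <;> linarith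
        rw [hc]
        push_cast
        rw [one_mul, chernoffG_eq' (by norm_num)]
        rw [← Real.exp_log hp0]
        apply Real.exp_le_exp.2
        have h4 : Real.log (1+3) = 2 * Real.log 2 := by
          rw [show (1:ℝ)+3 = 2^2 by norm_num, Real.log_pow]; push_cast; ring
        rw [hlp, h4]
        nlinarith [Real.log_two_gt_d9]
      · -- 3 ≤ 100 √(L'/μ)
        have hlo : μ/(1+μ) ≤ Real.log (1+μ) := by
          have := log_ge_one_sub_inv' (t := 1+μ) (by linarith)
          have he : 1 - 1/(1+μ) = μ/(1+μ) := by field_simp; ring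
          linarith [he ▸ this]
        have hup : Real.log (1+μ) ≤ L' * Real.log 2 := by
          rw [← hL'eq]; exact Real.log_le_log (by linarith) (by linarith)
        have hμL' : μ ≤ L' := by
          have h7 : 3*μ/4 ≤ μ/(1+μ) := by
            rw [div_le_div_iff₀ (by norm_num) (by linarith)]; nlinarith
          nlinarith [Real.log_two_lt_d9, hμ.le]
        have hs : (1:ℝ) ≤ Real.sqrt (L'/μ) :=
          Real.one_le_sqrt.2 ((one_le_div hμ).2 hμL')
        linarith
    · -- large μ : δ = 100 √(L'/μ)
      push_neg at hsub
      -- L' ≤ 5 μ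
      have hL5 : L' ≤ 5*μ := by
        have e1 : 1/p ≤ Real.exp (2*μ*Real.log 2) := by
          rw [← Real.exp_log (show (0:ℝ) < 1/p by positivity), hl1p]
          apply Real.exp_le_exp.2; nlinarith
        have e2 : 1 + 3*μ*Real.log 2 ≤ Real.exp (3*μ*Real.log 2) := by
          have := Real.add_one_le_exp (3*μ*Real.log 2); linarith
        have e3 : Real.exp (2*μ*Real.log 2) * Real.exp (3*μ*Real.log 2)
            = Real.exp (5*μ*Real.log 2) := by
          rw [← Real.exp_add]; ring_nf
        have e4 : 1 ≤ Real.exp (2*μ*Real.log 2) := by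
          rw [show (1:ℝ) = Real.exp 0 from (Real.exp_zero).symm]
          apply Real.exp_le_exp.2; positivity
        have e5 : μ + 1/p ≤ Real.exp (5*μ*Real.log 2) := by
          have h6 : Real.exp (2*μ*Real.log 2) * (1 + 3*μ*Real.log 2)
              ≤ Real.exp (5*μ*Real.log 2) := by
            rw [← e3]; exact mul_le_mul_of_nonneg_left e2 (Real.exp_pos _).le
          have h8 : 1 * (3*μ*Real.log 2) ≤ Real.exp (2*μ*Real.log 2) * (3*μ*Real.log 2) :=
            mul_le_mul_of_nonneg_right e4 (by positivity)
          rw [one_mul] at h8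
          nlinarith [e1, h8, Real.log_two_gt_d9, hμ]
        have e6 : Real.log (μ + 1/p) ≤ 5*μ*Real.log 2 := by
          calc Real.log (μ + 1/p) ≤ Real.log (Real.exp (5*μ*Real.log 2)) :=
                Real.log_le_log (by positivity) e5
            _ = 5*μ*Real.log 2 := Real.log_exp _
        rw [hL'eq] at e6
        have := (mul_le_mul_iff_left₀ hl2).mp e6
        linarith
      have hLL' : L ≤ L' := by
        have h9 : Real.log (1/p) ≤ Real.log (μ + 1/p) :=
          Real.log_le_log (by positivity) (by linarith)
        rw [hl1p, hL'eq] at h9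
        exact (mul_le_mul_iff_left₀ hl2).mp h9
      have hup : Real.log (1+μ) ≤ L' * Real.log 2 := by
        rw [← hL'eq]; exact Real.log_le_log (by linarith) (by linarith)
      have hlo : (1:ℝ)/4 ≤ Real.log (1+μ) := by
        have := log_ge_one_sub_inv' (t := 1+μ) (by linarith)
        have h7 : 1/(1+μ) ≤ (3:ℝ)/4 := by
          rw [div_le_iff₀ (show (0:ℝ) < 1+μ by linarith)]; linarith
        linarith
      have hLlow : (1:ℝ)/4 ≤ L' * Real.log 2 := le_trans hlo hup
      set δ := 100*Real.sqrt (L'/μ) with hδdef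
      clear_value δ
      have hδ0 : 0 < δ := by
        have h0 : 0 < Real.sqrt (L'/μ) := Real.sqrt_pos.2 (by positivity)
        rw [hδdef]; positivity
      refine ⟨δ, hδ0, ?_, fun h => absurd h (not_le.2 (by linarith)), fun _ => le_refl _⟩
      apply chernoff_reduce' hμ hδ0 hp0
      have hδsq : μ * δ^2 = 10000 * L' := by
        rw [hδdef, mul_pow, Real.sq_sqrt (by positivity)]
        field_simp
        norm_num
      have hδle : δ ≤ 224 := by
        have h1 : Real.sqrt (L'/μ) ≤ Real.sqrt (2.24^2) := by
          apply Real.sqrt_le_sqrt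
          rw [div_le_iff₀ hμ]; nlinarith
        rw [Real.sqrt_sq (by norm_num)] at h1
        rw [hδdef]; linarith
      have hf : μ*(δ - (1+δ)*Real.log (1+δ)) ≤ -(μ*(δ^2/(2*(2+δ)))) := by
        have := mul_le_mul_of_nonneg_left (chernoff_key2' hδ0.le) hμ.le
        linarith
      have hq : 10000*L'/452 ≤ μ*(δ^2/(2*(2+δ))) := by
        have e1 : μ*(δ^2/(2*(2+δ))) = 10000*L'/(2*(2+δ)) := by
          rw [← hδsq]; field_simp
        rw [e1]
        exact div_le_div_of_nonneg_left (by positivity) (by linarith) (by linarith)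
      have hceil : Real.log (1 + μ*δ) ≤ L' * Real.log 2 + 8 * Real.log 2 := by
        have e2 : Real.log (1 + μ*δ) ≤ Real.log ((1+μ)*(1+δ)) := by
          apply Real.log_le_log (by positivity)
          nlinarith [hμ.le, hδ0.le]
        have e3 : Real.log ((1+μ)*(1+δ)) = Real.log (1+μ) + Real.log (1+δ) :=
          Real.log_mul (by positivity) (by positivity)
        have e4 : Real.log (1+δ) ≤ 8 * Real.log 2 := by
          calc Real.log (1+δ) ≤ Real.log 256 := Real.log_le_log (by linarith) (by linarith)
            _ = 8 * Real.log 2 := by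
              rw [show (256:ℝ) = 2^8 by norm_num, Real.log_pow]; push_cast; ring
        linarith
      rw [hlp]
      have hL'lb : (0.36:ℝ) ≤ L' := by
        nlinarith [Real.log_two_lt_d9, hL'0.le]
      nlinarith [hf, hq, hceil, Real.log_two_lt_d9, hLlow, hL'lb,
        mul_le_mul_of_nonneg_right hLL' hl2.le]
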